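/- Let P_k ∈ ℤ[X_0,...,X_k,Y_0,...,Y_k] be the Witt addition polynomials and S_k(X,Y) = P_k(X,0,...,0,Y,0,...,0). Then for every l ≥ 0, the following congruence of formal power series holds: AH(X) + AH(Y) ≡ AH(S_0(X,Y)) + ... + AH(S_l(X,Y)) modulo the ideal (X,Y)^{p^{l+1}} in ℚ_p[[X,Y]], where AH(X) = Σ_{i≥0} X^{p^i}/p^i. -/

import Mathlib

open MvPolynomial

/-- The coefficient (at the multidegree `d`) of the formal power series
`AH(Q) = ∑_{i≥0} Q^{p^i}/p^i` in `ℚ_p[[X,Y]]`, where `Q ∈ ℚ_p[X,Y]` has no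
constant term, so that only the finitely many `i` with `p^i ≤ |d|` contribute. -/
noncomputable def ahSubstCoeff (p : ℕ) [Fact p.Prime] (Q : MvPolynomial (Fin 2) ℚ_[p])
    (d : Fin 2 →₀ ℕ) : ℚ_[p] :=
  ∑ i ∈ Finset.range ((d.sum fun _ n => n) + 1),
    ((p : ℚ_[p]) ^ i)⁻¹ * MvPolynomial.coeff d (Q ^ p ^ i)

/-- `S_k(X,Y) = P_k(X,0,…,0,Y,0,…,0)`, where `P_k` is the `k`-th Witt vector
addition polynomial. -/
noncomputable def wittS (p : ℕ) [Fact p.Prime] (k : ℕ) : MvPolynomial (Fin 2) ℤ :=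
  MvPolynomial.aeval (fun q : Fin 2 × ℕ => if q.2 = 0 then MvPolynomial.X q.1 else 0)
    (WittVector.wittAdd p k)

section Aux

variable (p : ℕ) [hp : Fact p.Prime]

/-- The ghost identity for `wittS` over `ℤ`. -/
lemma wittS_ghost (n : ℕ) :
    ∑ j ∈ Finset.range (n + 1),
        (p : MvPolynomial (Fin 2) ℤ) ^ j * wittS p j ^ p ^ (n - j) =
      X 0 ^ p ^ n + X 1 ^ p ^ n := by
  classical
  have h := congrArg
    (aeval (fun q : Fin 2 × ℕ => if q.2 = 0 then (X q.1 : MvPolynomial (Fin 2) ℤ) else 0))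
    (wittStructureInt_prop p (X (0 : Fin 2) + X 1) n)
  rw [aeval_bind₁, aeval_bind₁] at h
  rw [aeval_wittPolynomial] at h
  have hR : ∀ b : Fin 2,
      (aeval (fun q : Fin 2 × ℕ => if q.2 = 0 then (X q.1 : MvPolynomial (Fin 2) ℤ) else 0))
        (rename (Prod.mk b) (wittPolynomial p ℤ n)) = X b ^ p ^ n := by
    intro b
    rw [aeval_rename, aeval_wittPolynomial]
    rw [Finset.sum_eq_single 0]
    · simp
    · intro i _ hi
      have h1 : p ^ (n - i) ≠ 0 := pow_ne_zero _ hp.out.ne_zero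
      simp [Function.comp, hi, zero_pow h1]
    · intro h0
      exact absurd (Finset.mem_range.mpr (Nat.succ_pos n)) h0
  rw [map_add, aeval_X, aeval_X, hR 0, hR 1] at h
  exact h

/-- `wittS p n` is homogeneous of degree `p ^ n`. -/
lemma wittS_isHomogeneous (n : ℕ) : (wittS p n).IsHomogeneous (p ^ n) := by
  induction n using Nat.strong_induction_on with
  | _ n ih =>
    have hg := wittS_ghost p n
    rw [Finset.sum_range_succ, Nat.sub_self, pow_zero, pow_one] at hg
    have heq : (p : MvPolynomial (Fin 2) ℤ) ^ n * wittS p n =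
        (X 0 ^ p ^ n + X 1 ^ p ^ n) -
          ∑ j ∈ Finset.range n, (p : MvPolynomial (Fin 2) ℤ) ^ j * wittS p j ^ p ^ (n - j) := by
      rw [← hg]; ring
    have hhom : ((p : MvPolynomial (Fin 2) ℤ) ^ n * wittS p n).IsHomogeneous (p ^ n) := by
      rw [heq]
      apply IsHomogeneous.sub
      · exact (isHomogeneous_X_pow _ _).add (isHomogeneous_X_pow _ _)
      · apply IsHomogeneous.sum
        intro j hj
        have hj' : j < n := Finset.mem_range.mp hj
        have h1 : (wittS p j ^ p ^ (n - j)).IsHomogeneous (p ^ n) := by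
          have := (ih j hj').pow (p ^ (n - j))
          rwa [← pow_add, Nat.add_sub_cancel' hj'.le] at this
        rw [show ((p : MvPolynomial (Fin 2) ℤ) ^ j) = C ((p : ℤ) ^ j) by
          rw [map_pow, map_natCast]]
        exact h1.C_mul _
    intro d hd
    have h2 : coeff d ((p : MvPolynomial (Fin 2) ℤ) ^ n * wittS p n) ≠ 0 := by
      rw [show ((p : MvPolynomial (Fin 2) ℤ) ^ n) = C ((p : ℤ) ^ n) by
        rw [map_pow, map_natCast], coeff_C_mul]
      exact mul_ne_zero (pow_ne_zero _ (Int.natCast_ne_zero.mpr hp.out.ne_zero)) hd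
    exact hhom h2

/-- The ghost identity for `wittS` over `ℚ_p`. -/
lemma wittS_ghost_padic (e : ℕ) :
    ∑ k ∈ Finset.range (e + 1),
        (p : MvPolynomial (Fin 2) ℚ_[p]) ^ k *
          ((wittS p k).map (Int.castRingHom ℚ_[p])) ^ p ^ (e - k) =
      X 0 ^ p ^ e + X 1 ^ p ^ e := by
  have h := congrArg (MvPolynomial.map (Int.castRingHom ℚ_[p])) (wittS_ghost p e)
  simpa only [map_sum, map_mul, map_pow, map_natCast, map_add, MvPolynomial.map_X] using h

end Aux

/-- For every `l ≥ 0` the congruence of formal power series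
`AH(X) + AH(Y) ≡ AH(S_0(X,Y)) + ⋯ + AH(S_l(X,Y)) mod (X,Y)^{p^{l+1}}`
holds in `ℚ_p[[X,Y]]`: the coefficients at every multidegree `d` of total
degree `< p^{l+1}` agree. -/
theorem stmt_14 (p : ℕ) [Fact p.Prime] (l : ℕ) :
    ∀ d : Fin 2 →₀ ℕ, (d.sum fun _ n => n) < p ^ (l + 1) →
      ahSubstCoeff p (X 0) d + ahSubstCoeff p (X 1) d =
        ∑ k ∈ Finset.range (l + 1),
          ahSubstCoeff p ((wittS p k).map (Int.castRingHom ℚ_[p])) d := by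
  intro d hd
  classical
  have hp' : p.Prime := Fact.out
  have hpne : (p : ℚ_[p]) ≠ 0 := Nat.cast_ne_zero.mpr hp'.ne_zero
  simp only [ahSubstCoeff]
  set m := d.sum fun _ n => n with hm
  have hdeg : d.degree = m := rfl
  -- vanishing lemmas
  have hX : ∀ (b : Fin 2) (i : ℕ), m ≠ p ^ i →
      coeff d ((X b : MvPolynomial (Fin 2) ℚ_[p]) ^ p ^ i) = 0 := by
    intro b i h
    exact (isHomogeneous_X_pow b (p ^ i)).coeff_eq_zero (by rw [hdeg]; exact h)
  have hS : ∀ (k i : ℕ), m ≠ p ^ (k + i) →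
      coeff d (((wittS p k).map (Int.castRingHom ℚ_[p])) ^ p ^ i) = 0 := by
    intro k i h
    rw [← map_pow, MvPolynomial.coeff_map]
    have hz : coeff d (wittS p k ^ p ^ i) = 0 := by
      have hh := (wittS_isHomogeneous p k).pow (p ^ i)
      rw [← pow_add] at hh
      exact hh.coeff_eq_zero (by rw [hdeg]; exact h)
    rw [hz, map_zero]
  by_cases hex : ∃ e, p ^ e = m
  · obtain ⟨e, he⟩ := hex
    have hel : e < l + 1 := by
      rw [← he] at hd
      exact (Nat.pow_lt_pow_iff_right hp'.one_lt).mp hd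
    have hem : e < m + 1 := by
      have := (Nat.lt_pow_self hp'.one_lt : e < p ^ e)
      omega
    -- LHS reduction
    have hLX : ∀ b : Fin 2,
        ∑ i ∈ Finset.range (m + 1),
            ((p : ℚ_[p]) ^ i)⁻¹ * coeff d ((X b : MvPolynomial (Fin 2) ℚ_[p]) ^ p ^ i)
          = ((p : ℚ_[p]) ^ e)⁻¹ * coeff d ((X b : MvPolynomial (Fin 2) ℚ_[p]) ^ p ^ e) := by
      intro b
      apply Finset.sum_eq_single_of_mem e (Finset.mem_range.mpr hem)
      intro i _ hie
      rw [hX b i fun hcon => hie (Nat.pow_right_injective hp'.two_le (he.trans hcon).symm),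
        mul_zero]
    -- RHS per-k reduction
    have hRk : ∀ k ∈ Finset.range (l + 1),
        ∑ i ∈ Finset.range (m + 1),
            ((p : ℚ_[p]) ^ i)⁻¹ *
              coeff d (((wittS p k).map (Int.castRingHom ℚ_[p])) ^ p ^ i)
          = if k ≤ e then
              ((p : ℚ_[p]) ^ (e - k))⁻¹ *
                coeff d (((wittS p k).map (Int.castRingHom ℚ_[p])) ^ p ^ (e - k))
            else 0 := by
      intro k _
      by_cases hke : k ≤ e
      · rw [if_pos hke]
        apply Finset.sum_eq_single_of_mem (e - k)
          (Finset.mem_range.mpr (lt_of_le_of_lt (Nat.sub_le e k) hem))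
        intro i _ hie
        have hne : m ≠ p ^ (k + i) := by
          intro hcon
          apply hie
          have : e = k + i := Nat.pow_right_injective hp'.two_le (he.trans hcon)
          omega
        rw [hS k i hne, mul_zero]
      · rw [if_neg hke]
        apply Finset.sum_eq_zero
        intro i _
        have hne : m ≠ p ^ (k + i) := by
          intro hcon
          have : e = k + i := Nat.pow_right_injective hp'.two_le (he.trans hcon)
          omega
        rw [hS k i hne, mul_zero]
    rw [hLX 0, hLX 1, Finset.sum_congr rfl hRk]
    rw [← Finset.sum_subset (Finset.range_subset_range.mpr hel)
      (fun x _ hx => if_neg (fun hxe => hx (Finset.mem_range.mpr (Nat.lt_succ_of_le hxe))))]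
    rw [Finset.sum_congr rfl
      (fun k hk => if_pos (Nat.lt_succ_iff.mp (Finset.mem_range.mp hk)))]
    -- use the ghost identity
    have hgc := congrArg (coeff d) (wittS_ghost_padic p e)
    rw [MvPolynomial.coeff_sum, coeff_add] at hgc
    have hCk : ∀ k : ℕ, ∀ φ : MvPolynomial (Fin 2) ℚ_[p],
        coeff d ((p : MvPolynomial (Fin 2) ℚ_[p]) ^ k * φ) = (p : ℚ_[p]) ^ k * coeff d φ := by
      intro k φ
      rw [show ((p : MvPolynomial (Fin 2) ℚ_[p]) ^ k) = C ((p : ℚ_[p]) ^ k) by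
        rw [map_pow, map_natCast], coeff_C_mul]
    simp only [hCk] at hgc
    have hinv : ∀ k ∈ Finset.range (e + 1),
        ((p : ℚ_[p]) ^ (e - k))⁻¹ *
            coeff d (((wittS p k).map (Int.castRingHom ℚ_[p])) ^ p ^ (e - k))
          = ((p : ℚ_[p]) ^ e)⁻¹ * ((p : ℚ_[p]) ^ k *
              coeff d (((wittS p k).map (Int.castRingHom ℚ_[p])) ^ p ^ (e - k))) := by
      intro k hk
      have hke : k ≤ e := Nat.lt_succ_iff.mp (Finset.mem_range.mp hk)
      have hsplit : (p : ℚ_[p]) ^ e = (p : ℚ_[p]) ^ (e - k) * (p : ℚ_[p]) ^ k := by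
        rw [← pow_add, Nat.sub_add_cancel hke]
      rw [hsplit, mul_inv, mul_assoc, inv_mul_cancel_left₀ (pow_ne_zero k hpne)]
    rw [Finset.sum_congr rfl hinv, ← Finset.mul_sum, hgc, mul_add]
  · push_neg at hex
    have h1 : ∀ b : Fin 2,
        ∑ i ∈ Finset.range (m + 1),
            ((p : ℚ_[p]) ^ i)⁻¹ * coeff d ((X b : MvPolynomial (Fin 2) ℚ_[p]) ^ p ^ i) = 0 := by
      intro b
      apply Finset.sum_eq_zero
      intro i _
      rw [hX b i fun hcon => hex i hcon.symm, mul_zero]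
    rw [h1 0, h1 1]
    rw [Finset.sum_eq_zero, add_zero]
    intro k _
    apply Finset.sum_eq_zero
    intro i _
    rw [hS k i fun hcon => hex (k + i) hcon.symm, mul_zero]
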